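/- Under the projective flatness assumption R^{f*Q}(U,V̄) = (1/q) h(U,V) Id_Q, the ambient curvature satisfies R^{Gr}(U,V̄)Z = (1/q) h(Z,V) U + (1/q) h(U,V) Z for all (1,0)-vectors U, V, Z tangent to M; consequently R^{Gr}(U,V̄)Z is tangent to M and the Codazzi equation gives ∇_{V̄} σ (U, Z) = −(R^{Gr}(U,V̄)Z)^⊥ = 0, i.e. the second fundamental form σ of M in Gr_p(ℂⁿ) is antiholomorphically parallel. -/
import Mathlib


open Matrix

/-- Lemma 3.3: Under projective flatness
`R^{f*Q}(U,V̄) = (1/q) h(U,V) Id_Q`, the ambient curvature satisfies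
`R^{Gr}(U,V̄)Z = (1/q) h(Z,V) U + (1/q) h(U,V) Z` for `(1,0)`-vectors `U, V, Z` tangent
to `M`; consequently `R^{Gr}(U,V̄)Z` is tangent to `M` and, by the Codazzi equation
`(∇_{V̄}σ)(U,Z) = −(R^{Gr}(U,V̄)Z)^⊥`, the second fundamental form is
antiholomorphically parallel: `(∇_{V̄}σ)(U,Z) = 0`.

Pointwise formalization: ambient `(1,0)`-vectors are `q × p` matrices (`H_W = W`,
`K_{V̄} = −Vᴴ`), `TM` is the holomorphic tangent space of `M`, `perp` is the projection
onto the normal complement (so `perp X = 0 ↔ X ∈ TM`), `h(X,Y) = tr(Yᴴ X)`, projective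
flatness reads `−H_X K_{Ȳ} = X Yᴴ = (1/q) h(X,Y) Id` for `X, Y ∈ TM`, and
`R^{Gr}(U,V̄)Z = −H_Z K_{V̄} H_U − H_U K_{V̄} H_Z`. -/
theorem curvature_tangent_and_sigma_antiholomorphic_parallel
    (p q : ℕ) (hq : 0 < q)
    (TM : Submodule ℂ (Matrix (Fin q) (Fin p) ℂ))
    (perp : Matrix (Fin q) (Fin p) ℂ →ₗ[ℂ] Matrix (Fin q) (Fin p) ℂ)
    (hperp : ∀ X : Matrix (Fin q) (Fin p) ℂ, perp X = 0 ↔ X ∈ TM)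
    (hflat : ∀ X ∈ TM, ∀ Y ∈ TM,
      X * Yᴴ = (((q : ℂ))⁻¹ * (Yᴴ * X).trace) • (1 : Matrix (Fin q) (Fin q) ℂ))
    (U V Z : Matrix (Fin q) (Fin p) ℂ) (hU : U ∈ TM) (hV : V ∈ TM) (hZ : Z ∈ TM)
    (nablaSigma : Matrix (Fin q) (Fin p) ℂ)
    (hCodazzi : nablaSigma = -(perp (-(Z * (-(Vᴴ)) * U) - (U * (-(Vᴴ)) * Z)))) :
    (-(Z * (-(Vᴴ)) * U) - (U * (-(Vᴴ)) * Z)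
        = (((q : ℂ))⁻¹ * (Vᴴ * Z).trace) • U + (((q : ℂ))⁻¹ * (Vᴴ * U).trace) • Z) ∧
      (-(Z * (-(Vᴴ)) * U) - (U * (-(Vᴴ)) * Z)) ∈ TM ∧
      nablaSigma = 0 := by

  have key : -(Z * (-(Vᴴ)) * U) - (U * (-(Vᴴ)) * Z)
      = (((q : ℂ))⁻¹ * (Vᴴ * Z).trace) • U + (((q : ℂ))⁻¹ * (Vᴴ * U).trace) • Z := by
    have h1 := hflat Z hZ V hV
    have h2 := hflat U hU V hV
    have e1 : Z * Vᴴ * U = (((q : ℂ))⁻¹ * (Vᴴ * Z).trace) • U := by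
      rw [h1, Matrix.smul_mul, Matrix.one_mul]
    have e2 : U * Vᴴ * Z = (((q : ℂ))⁻¹ * (Vᴴ * U).trace) • Z := by
      rw [h2, Matrix.smul_mul, Matrix.one_mul]
    have : -(Z * (-(Vᴴ)) * U) - (U * (-(Vᴴ)) * Z) = Z * Vᴴ * U + U * Vᴴ * Z := by
      simp [Matrix.mul_neg, Matrix.neg_mul]
    rw [this, e1, e2]
  have hmem : (-(Z * (-(Vᴴ)) * U) - (U * (-(Vᴴ)) * Z)) ∈ TM := by
    rw [key]
    exact Submodule.add_mem _ (Submodule.smul_mem _ _ hU) (Submodule.smul_mem _ _ hZ)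
  refine ⟨key, hmem, ?_⟩
  rw [hCodazzi, (hperp _).mpr hmem, neg_zero]
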